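/- arXiv:0711.3957 — 6 statements merged into one kernel-verified Lean document; each statement's English description precedes it below -/
import Mathlib

section
/- Let σ be continuously differentiable and positive, S continuous, G(S) < ∞, and let f_S be the invariant density. Let a : ℝ → ℝ be continuous with ∫_ℝ a(x) f_S(x) dx = 0 and ∫_{-∞}^y |a(v)| f_S(v) dv < ∞ for every y. Define G_a(x) = ∫_0^x (σ(y)² f_S(y))^{-1} (∫_{-∞}^y 2 a(v) f_S(v) dv) dy. Then G_a is twice continuously differentiable and solves the Poisson equation S(x) G_a'(x) + (1/2) σ(x)² G_a''(x) = a(x) for all x ∈ ℝ. -/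
open MeasureTheory Real Set Filter intervalIntegral

/-- With σ continuously differentiable and positive, S continuous, G(S) < ∞ and
`fS` the invariant density, let `a` be continuous with `∫ a fS = 0` and
`∫_{-∞}^y |a| fS < ∞` for every `y`.  Then
`G_a(x) = ∫_0^x (σ(y)² fS(y))⁻¹ (∫_{-∞}^y 2 a fS) dy` is twice continuously differentiable and
solves the Poisson equation `S G_a' + (1/2) σ² G_a'' = a`. -/
theorem moment_estimation_stmt1
    (σ S : ℝ → ℝ)
    (hσ1 : ContDiff ℝ 1 σ) (hσpos : ∀ x, 0 < σ x)
    (hSc : Continuous S)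
    (hGfin : Integrable (fun y : ℝ =>
      ((σ y) ^ 2)⁻¹ * Real.exp (2 * ∫ v in (0:ℝ)..y, S v / (σ v) ^ 2)))
    (fS : ℝ → ℝ)
    (hfS : ∀ x, fS x =
      (∫ y : ℝ, ((σ y) ^ 2)⁻¹ * Real.exp (2 * ∫ v in (0:ℝ)..y, S v / (σ v) ^ 2))⁻¹
        * ((σ x) ^ 2)⁻¹ * Real.exp (2 * ∫ v in (0:ℝ)..x, S v / (σ v) ^ 2))
    (a : ℝ → ℝ) (hac : Continuous a)
    (ha0 : ∫ x : ℝ, a x * fS x = 0)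
    (haint : ∀ y : ℝ, IntegrableOn (fun v => |a v| * fS v) (Set.Iic y))
    (Ga : ℝ → ℝ)
    (hGa : ∀ x, Ga x =
      ∫ y in (0:ℝ)..x, ((σ y) ^ 2 * fS y)⁻¹ * (∫ v in Set.Iic y, 2 * a v * fS v)) :
    ContDiff ℝ 2 Ga ∧
      ∀ x : ℝ, S x * deriv Ga x + (1 / 2) * (σ x) ^ 2 * deriv (deriv Ga) x = a x := by
  have hσc : Continuous σ := hσ1.continuous
  have hσne : ∀ x, (σ x) ^ 2 ≠ 0 := fun x => pow_ne_zero _ (hσpos x).ne'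
  set g : ℝ → ℝ := fun v => S v / (σ v) ^ 2 with hgdef
  have hgc : Continuous g := hSc.div (by fun_prop) hσne
  set F : ℝ → ℝ := fun x => ∫ v in (0:ℝ)..x, g v with hFdef
  have hF : ∀ x, HasDerivAt F (g x) x := fun x =>
    (hgc.integral_hasStrictDerivAt 0 x).hasDerivAt
  set E : ℝ → ℝ := fun x => Real.exp (2 * F x) with hEdef
  have hE : ∀ x, HasDerivAt E (Real.exp (2 * F x) * (2 * g x)) x := fun x =>
    ((hF x).const_mul 2).exp
  have hEc : Continuous E := by
    apply continuous_iff_continuousAt.2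
    exact fun x => ((hE x).continuousAt)
  have hEpos : ∀ x, 0 < E x := fun x => Real.exp_pos _
  set G : ℝ := ∫ y : ℝ, ((σ y) ^ 2)⁻¹ * E y with hGdef
  have hGpos : 0 < G := by
    rw [hGdef]
    rw [integral_pos_iff_support_of_nonneg]
    · have : Function.support (fun y => ((σ y) ^ 2)⁻¹ * E y) = Set.univ := by
        ext y
        have h1 := hσne y
        have h2 := (hEpos y).ne'
        simp only [Function.mem_support, Set.mem_univ, iff_true]
        exact mul_ne_zero (inv_ne_zero h1) h2
      rw [this]
      simp
    · intro y
      positivity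
    · exact hGfin
  have hGne : G ≠ 0 := hGpos.ne'
  have hfS' : ∀ x, fS x = G⁻¹ * ((σ x) ^ 2)⁻¹ * E x := fun x => hfS x
  have hfSpos : ∀ x, 0 < fS x := by
    intro x; rw [hfS' x]
    have := hσne x
    positivity
  have hfSc : Continuous fS := by
    have : Continuous (fun x => G⁻¹ * ((σ x) ^ 2)⁻¹ * E x) := by
      apply Continuous.mul _ hEc
      exact continuous_const.mul ((hσc.pow 2).inv₀ hσne)
    exact this.congr fun x => (hfS' x).symm
  -- the inner integrand
  set h : ℝ → ℝ := fun v => 2 * a v * fS v with hhdef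
  have hhc : Continuous h := by fun_prop
  have hhint : ∀ y, IntegrableOn h (Set.Iic y) := by
    intro y
    apply Integrable.mono' ((haint y).const_mul 2)
    · exact (hhc.aestronglyMeasurable).restrict
    · filter_upwards with v
      have : |h v| = 2 * (|a v| * fS v) := by
        rw [hhdef]
        rw [abs_mul, abs_mul, abs_of_nonneg (hfSpos v).le]
        simp [abs_of_nonneg, mul_assoc]
      simp only [Real.norm_eq_abs, this, mul_assoc]
      exact le_refl _
  set A : ℝ → ℝ := fun y => ∫ v in Set.Iic y, h v with hAdef
  have hArep : ∀ y, A y = A 0 + ∫ v in (0:ℝ)..y, h v := by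
    intro y
    have := integral_Iic_sub_Iic (μ := volume) (f := h) (hhint 0) (hhint y)
    rw [hAdef]; simp only
    linarith [this]
  have hA : ∀ y, HasDerivAt A (h y) y := by
    intro y
    have : HasDerivAt (fun y => A 0 + ∫ v in (0:ℝ)..y, h v) (h y) y :=
      ((hhc.integral_hasStrictDerivAt 0 y).hasDerivAt).const_add (A 0)
    exact this.congr_deriv rfl |>.congr_of_eventuallyEq (by filter_upwards with z; rw [hArep z])
  have hAc : Continuous A := continuous_iff_continuousAt.2 fun x => (hA x).continuousAt
  -- φ = candidate derivative of Ga
  set φ : ℝ → ℝ := fun x => G * (E x)⁻¹ * A x with hφdef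
  have hEinv : ∀ x, HasDerivAt (fun x => (E x)⁻¹)
      (-(Real.exp (2 * F x) * (2 * g x)) / (E x) ^ 2) x := fun x => (hE x).inv (hEpos x).ne'
  have hφ : ∀ x, HasDerivAt φ (-(2 * g x) * φ x + 2 * a x * ((σ x) ^ 2)⁻¹) x := by
    intro x
    have h1 : HasDerivAt (fun x => (E x)⁻¹ * A x)
        ((-(Real.exp (2 * F x) * (2 * g x)) / (E x) ^ 2) * A x + (E x)⁻¹ * h x) x :=
      (hEinv x).mul (hA x)
    have h2 := h1.const_mul G
    have hEne : E x ≠ 0 := (hEpos x).ne'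
    have h2' : HasDerivAt φ
        (G * ((-(Real.exp (2 * F x) * (2 * g x)) / (E x) ^ 2) * A x + (E x)⁻¹ * h x)) x := by
      simpa [hφdef, mul_assoc] using h2
    have heq : -(2 * g x) * φ x + 2 * a x * ((σ x) ^ 2)⁻¹ =
        G * ((-(Real.exp (2 * F x) * (2 * g x)) / (E x) ^ 2) * A x + (E x)⁻¹ * h x) := by
      have hEx : Real.exp (2 * F x) = E x := rfl
      rw [hφdef, hhdef]
      simp only
      rw [hfS' x, hEx]
      field_simp [hGne]
    rw [heq]
    exact h2'
  have hφc : Continuous φ := continuous_iff_continuousAt.2 fun x => (hφ x).continuousAt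
  -- Ga
  have hGaeq : Ga = fun x => ∫ y in (0:ℝ)..x, φ y := by
    funext x
    rw [hGa x]
    apply intervalIntegral.integral_congr
    intro y _
    rw [hφdef]
    simp only
    have : (σ y) ^ 2 * fS y = G⁻¹ * E y := by
      rw [hfS' y]
      field_simp [hGne]
      linear_combination E y * mul_inv_cancel₀ (hσpos y).ne'
    rw [this, hAdef]
    rw [mul_inv, inv_inv]
  have hGa' : ∀ x, HasDerivAt Ga (φ x) x := by
    intro x
    rw [hGaeq]
    exact (hφc.integral_hasStrictDerivAt 0 x).hasDerivAt
  have hderiv1 : deriv Ga = φ := funext fun x => (hGa' x).deriv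
  have hderiv2 : ∀ x, deriv (deriv Ga) x = -(2 * g x) * φ x + 2 * a x * ((σ x) ^ 2)⁻¹ := by
    intro x
    rw [hderiv1]
    exact (hφ x).deriv
  constructor
  · have h2 : (2 : WithTop ℕ∞) = 1 + 1 := by norm_num
    rw [h2, contDiff_succ_iff_deriv]
    refine ⟨fun x => (hGa' x).differentiableAt, by simp, ?_⟩
    rw [hderiv1, contDiff_one_iff_deriv]
    refine ⟨fun x => (hφ x).differentiableAt, ?_⟩
    have : deriv φ = fun x => -(2 * g x) * φ x + 2 * a x * ((σ x) ^ 2)⁻¹ :=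
      funext fun x => (hφ x).deriv
    rw [this]
    apply Continuous.add
    · exact (continuous_const.mul hgc).neg.mul hφc
    · exact (continuous_const.mul hac).mul ((hσc.pow 2).inv₀ hσne)
  · intro x
    rw [hderiv2 x, hderiv1]
    have hσx := hσne x
    simp only [hgdef]
    field_simp
    linear_combination (a x - S x * φ x) * mul_inv_cancel₀ (hσpos x).ne'
end

section
/- Let σ be continuously differentiable and positive, S continuous, G(S) < ∞, f_S the invariant density, and F : ℝ → ℝ continuous with ∫_ℝ |F| f_S < ∞. Put ϑ = ∫_ℝ F f_S and define H_S(y) = ∫_0^y 2 (σ(x)² f_S(x))^{-1} (∫_{-∞}^x (F(v) − ϑ) f_S(v) dv) dx. Then H_S is twice continuously differentiable, it satisfies the Poisson equation S(y) H_S'(y) + (1/2) σ(y)² H_S''(y) = F(y) − ϑ for all y, and σ(y) H_S'(y) = 2 M_S(y)/(σ(y) f_S(y)) where M_S(y) = ∫_{-∞}^y (F(v) − ϑ) f_S(v) dv. -/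
open MeasureTheory Real Set Filter intervalIntegral

set_option maxHeartbeats 1000000 in
/-- With σ continuously differentiable and positive, S continuous, G(S) < ∞,
`fS` the invariant density, and `F` continuous with `∫ |F| fS < ∞`, put `ϑ = ∫ F fS` and
`H_S(y) = ∫_0^y 2 (σ(x)² fS(x))⁻¹ (∫_{-∞}^x (F - ϑ) fS) dx`.  Then `H_S` is twice continuously
differentiable, satisfies `S H_S' + (1/2) σ² H_S'' = F - ϑ`, and
`σ(y) H_S'(y) = 2 M_S(y) / (σ(y) fS(y))` where `M_S(y) = ∫_{-∞}^y (F - ϑ) fS`. -/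
theorem moment_estimation_stmt2
    (σ S : ℝ → ℝ)
    (hσ1 : ContDiff ℝ 1 σ) (hσpos : ∀ x, 0 < σ x)
    (hSc : Continuous S)
    (hGfin : Integrable (fun y : ℝ =>
      ((σ y) ^ 2)⁻¹ * Real.exp (2 * ∫ v in (0:ℝ)..y, S v / (σ v) ^ 2)))
    (fS : ℝ → ℝ)
    (hfS : ∀ x, fS x =
      (∫ y : ℝ, ((σ y) ^ 2)⁻¹ * Real.exp (2 * ∫ v in (0:ℝ)..y, S v / (σ v) ^ 2))⁻¹
        * ((σ x) ^ 2)⁻¹ * Real.exp (2 * ∫ v in (0:ℝ)..x, S v / (σ v) ^ 2))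
    (F : ℝ → ℝ) (hFc : Continuous F)
    (hFint : Integrable (fun x => |F x| * fS x))
    (ϑ : ℝ) (hϑ : ϑ = ∫ x : ℝ, F x * fS x)
    (M : ℝ → ℝ) (hM : ∀ y, M y = ∫ v in Set.Iic y, (F v - ϑ) * fS v)
    (H : ℝ → ℝ)
    (hH : ∀ y, H y =
      ∫ x in (0:ℝ)..y, 2 * ((σ x) ^ 2 * fS x)⁻¹ * (∫ v in Set.Iic x, (F v - ϑ) * fS v)) :
    ContDiff ℝ 2 H ∧
      (∀ y : ℝ, S y * deriv H y + (1 / 2) * (σ y) ^ 2 * deriv (deriv H) y = F y - ϑ) ∧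
      (∀ y : ℝ, σ y * deriv H y = 2 * M y / (σ y * fS y)) := by
  have hσc : Continuous σ := hσ1.continuous
  have hσne : ∀ x, σ x ≠ 0 := fun x => (hσpos x).ne'
  have hσ2ne : ∀ x, (σ x) ^ 2 ≠ 0 := fun x => pow_ne_zero 2 (hσne x)
  -- the exponent E
  set E : ℝ → ℝ := fun y => ∫ v in (0:ℝ)..y, S v / (σ v) ^ 2 with hEdef
  have hqc : Continuous (fun v => S v / (σ v) ^ 2) :=
    hSc.div (hσc.pow 2) hσ2ne
  have hEderiv : ∀ x, HasDerivAt E (S x / (σ x) ^ 2) x := fun x =>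
    intervalIntegral.integral_hasDerivAt_right (hqc.intervalIntegrable _ _)
      (hqc.stronglyMeasurableAtFilter _ _) hqc.continuousAt
  have hEdiff : Differentiable ℝ E := fun x => (hEderiv x).differentiableAt
  have hEderiv' : deriv E = fun x => S x / (σ x) ^ 2 := funext fun x => (hEderiv x).deriv
  have hE1 : ContDiff ℝ 1 E := contDiff_one_iff_deriv.2 ⟨hEdiff, by rw [hEderiv']; exact hqc⟩
  -- the normalizing constant G
  set G : ℝ := ∫ y : ℝ, ((σ y) ^ 2)⁻¹ * Real.exp (2 * E y) with hGdef
  have hppos : ∀ y, 0 < ((σ y) ^ 2)⁻¹ * Real.exp (2 * E y) := fun y =>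
    mul_pos (inv_pos.2 (pow_pos (hσpos y) 2)) (Real.exp_pos _)
  have hGpos : 0 < G := by
    rw [hGdef, integral_pos_iff_support_of_nonneg (fun y => (hppos y).le) hGfin]
    have : Function.support (fun y : ℝ => ((σ y) ^ 2)⁻¹ * Real.exp (2 * E y)) = Set.univ :=
      Set.eq_univ_of_forall fun y => Function.mem_support.2 (hppos y).ne'
    rw [this]
    simp
  have hGne : G ≠ 0 := hGpos.ne'
  -- fS facts
  have hfS' : ∀ x, fS x = G⁻¹ * (((σ x) ^ 2)⁻¹ * Real.exp (2 * E x)) := by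
    intro x; rw [hfS x]; ring
  have hfScont : Continuous fS := by
    have : Continuous fun x => G⁻¹ * (((σ x) ^ 2)⁻¹ * Real.exp (2 * E x)) :=
      continuous_const.mul (((hσc.pow 2).inv₀ hσ2ne).mul
        ((Real.continuous_exp.comp (continuous_const.mul hE1.continuous))))
    exact this.congr fun x => (hfS' x).symm
  have hfSpos : ∀ x, 0 < fS x := fun x => by
    rw [hfS' x]; exact mul_pos (inv_pos.2 hGpos) (hppos x)
  have hfSint : Integrable fS := by
    have : Integrable fun x => G⁻¹ * (((σ x) ^ 2)⁻¹ * Real.exp (2 * E x)) := hGfin.const_mul _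
    exact this.congr (Filter.Eventually.of_forall fun x => (hfS' x).symm)
  -- the function h = (F - ϑ) fS
  set h : ℝ → ℝ := fun v => (F v - ϑ) * fS v with hhdef
  have hhc : Continuous h := (hFc.sub continuous_const).mul hfScont
  have hFfSint : Integrable fun x => F x * fS x := by
    refine Integrable.mono' hFint ((hFc.mul hfScont).aestronglyMeasurable) ?_
    refine Filter.Eventually.of_forall fun x => ?_
    rw [Real.norm_eq_abs, abs_mul, abs_of_pos (hfSpos x)]
  have hhint : Integrable h := by
    have : Integrable fun x => F x * fS x - ϑ * fS x := hFfSint.sub (hfSint.const_mul ϑ)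
    exact this.congr (Filter.Eventually.of_forall fun x => by rw [hhdef]; ring)
  -- M and its derivative
  have hMeq : ∀ y, M y = M 0 + ∫ t in (0:ℝ)..y, h t := by
    intro y
    have := intervalIntegral.integral_Iic_sub_Iic (a := (0:ℝ)) (b := y) (f := h) (μ := volume)
      hhint.integrableOn hhint.integrableOn
    rw [hM y, hM 0]
    rw [hhdef] at this
    linarith [this]
  have hMderiv : ∀ y, HasDerivAt M (h y) y := by
    intro y
    have : HasDerivAt (fun u => M 0 + ∫ t in (0:ℝ)..u, h t) (h y) y := by
      exact (intervalIntegral.integral_hasDerivAt_right (hhc.intervalIntegrable _ _)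
        (hhc.stronglyMeasurableAtFilter _ _) hhc.continuousAt).const_add (M 0)
    exact this.congr_of_eventuallyEq (Filter.Eventually.of_forall fun u => (hMeq u))
  have hMdiff : Differentiable ℝ M := fun y => (hMderiv y).differentiableAt
  have hMderiv' : deriv M = h := funext fun y => (hMderiv y).deriv
  have hM1 : ContDiff ℝ 1 M := contDiff_one_iff_deriv.2 ⟨hMdiff, by rw [hMderiv']; exact hhc⟩
  have hMc : Continuous M := hMdiff.continuous
  -- the integrand g of H
  set g : ℝ → ℝ := fun x => 2 * G * Real.exp (-(2 * E x)) * M x with hgdef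
  have hσ2fS : ∀ x, (σ x) ^ 2 * fS x = G⁻¹ * Real.exp (2 * E x) := by
    intro x
    rw [hfS' x, mul_left_comm, mul_inv_cancel_left₀ (hσ2ne x)]
  have hgeq : ∀ x, 2 * ((σ x) ^ 2 * fS x)⁻¹ * (∫ v in Set.Iic x, (F v - ϑ) * fS v) = g x := by
    intro x
    rw [hσ2fS x, ← hM x, hgdef]
    simp only [Real.exp_neg]
    field_simp
  have hgc : Continuous g :=
    (continuous_const.mul (Real.continuous_exp.comp
      ((continuous_const.mul hE1.continuous).neg))).mul hMc
  have hg1 : ContDiff ℝ 1 g := by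
    refine (contDiff_const.mul ?_).mul hM1
    exact Real.contDiff_exp.comp ((contDiff_const.mul hE1).neg)
  have hgderiv : ∀ y, HasDerivAt g
      (2 * G * (Real.exp (-(2 * E y)) * -(2 * (S y / (σ y) ^ 2))) * M y
        + 2 * G * Real.exp (-(2 * E y)) * h y) y := by
    intro y
    have h1 : HasDerivAt (fun x => Real.exp (-(2 * E x)))
        (Real.exp (-(2 * E y)) * -(2 * (S y / (σ y) ^ 2))) y :=
      (((hEderiv y).const_mul 2).neg).exp
    have h2 := (h1.const_mul (2 * G)).mul (hMderiv y)
    exact h2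
  -- H and its derivatives
  have hHderiv : ∀ y, HasDerivAt H (g y) y := by
    intro y
    have hHeq : ∀ u, H u = ∫ x in (0:ℝ)..u, g x := by
      intro u
      rw [hH u]
      exact intervalIntegral.integral_congr fun x _ => hgeq x
    have : HasDerivAt (fun u => ∫ x in (0:ℝ)..u, g x) (g y) y :=
      intervalIntegral.integral_hasDerivAt_right (hgc.intervalIntegrable _ _)
        (hgc.stronglyMeasurableAtFilter _ _) hgc.continuousAt
    exact this.congr_of_eventuallyEq (Filter.Eventually.of_forall fun u => hHeq u)
  have hHdiff : Differentiable ℝ H := fun y => (hHderiv y).differentiableAt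
  have hHderiv' : deriv H = g := funext fun y => (hHderiv y).deriv
  refine ⟨?_, ?_, ?_⟩
  · rw [show (2 : WithTop ℕ∞) = 1 + 1 from rfl, contDiff_succ_iff_deriv]
    refine ⟨hHdiff, by simp, ?_⟩
    rw [hHderiv']
    exact hg1
  · intro y
    rw [hHderiv']
    have hdd : deriv g y = 2 * G * (Real.exp (-(2 * E y)) * -(2 * (S y / (σ y) ^ 2))) * M y
        + 2 * G * Real.exp (-(2 * E y)) * h y := (hgderiv y).deriv
    rw [hdd, hgdef]
    simp only [hhdef]
    have hab : Real.exp (-(2 * E y)) * Real.exp (2 * E y) = 1 := by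
      rw [← Real.exp_add, neg_add_cancel, Real.exp_zero]
    have hP : σ y ^ 2 * ((σ y) ^ 2)⁻¹ = 1 := mul_inv_cancel₀ (hσ2ne y)
    have hGG : G * G⁻¹ = 1 := mul_inv_cancel₀ hGne
    linear_combination (-(2 * G * Real.exp (-(2 * E y)) * M y * S y)) * hP
      + ((F y - ϑ) * G * Real.exp (-(2 * E y))) * (hσ2fS y)
      + ((F y - ϑ) * Real.exp (-(2 * E y)) * Real.exp (2 * E y)) * hGG
      + (F y - ϑ) * hab
  · intro y
    rw [hHderiv', hgdef]
    beta_reduce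
    have hab : Real.exp (-(2 * E y)) * Real.exp (2 * E y) = 1 := by
      rw [← Real.exp_add, neg_add_cancel, Real.exp_zero]
    have hGG : G * G⁻¹ = 1 := mul_inv_cancel₀ hGne
    have h0 : σ y * fS y ≠ 0 := mul_ne_zero (hσne y) (hfSpos y).ne'
    rw [eq_div_iff h0]
    linear_combination (2 * G * Real.exp (-(2 * E y)) * M y) * (hσ2fS y)
      + (2 * M y * Real.exp (-(2 * E y)) * Real.exp (2 * E y)) * hGG
      + (2 * M y) * hab
end

section
/- Let σ be continuous and positive, S continuous, G(S) < ∞, f_S the invariant density, F measurable with ∫_ℝ |F| f_S < ∞, ϑ = ∫_ℝ F f_S, M(y) = ∫_{-∞}^y (F(v) − ϑ) f_S(v) dv, and suppose J := ∫_ℝ M(y)²/(σ(y)² f_S(y)) dy is finite and positive. If ψ : ℝ → ℝ is continuous with compact support and satisfies the constraint ∫_ℝ (F(x) − ϑ)(∫_0^x ψ(v) dv) f_S(x) dx = 1/2, then ∫_ℝ ψ(y)² σ(y)² f_S(y) dy ≥ I_* where I_* = (4J)^{-1}. -/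
open MeasureTheory Real Set Filter intervalIntegral

set_option maxHeartbeats 1000000

/-- With σ continuous and positive, S continuous, G(S) < ∞, `fS` the invariant
density, `F` measurable with `∫ |F| fS < ∞`, `ϑ = ∫ F fS`, `M(y) = ∫_{-∞}^y (F - ϑ) fS`, and
`J = ∫ M²/(σ² fS)` finite and positive: every continuous compactly supported `ψ` satisfying the
constraint `∫ (F(x) - ϑ)(∫_0^x ψ) fS(x) dx = 1/2` has
`∫ ψ² σ² fS ≥ I_* = (4 J)⁻¹`. -/
theorem moment_estimation_stmt4
    (σ S : ℝ → ℝ)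
    (hσc : Continuous σ) (hσpos : ∀ x, 0 < σ x)
    (hSc : Continuous S)
    (hGfin : Integrable (fun y : ℝ =>
      ((σ y) ^ 2)⁻¹ * Real.exp (2 * ∫ v in (0:ℝ)..y, S v / (σ v) ^ 2)))
    (fS : ℝ → ℝ)
    (hfS : ∀ x, fS x =
      (∫ y : ℝ, ((σ y) ^ 2)⁻¹ * Real.exp (2 * ∫ v in (0:ℝ)..y, S v / (σ v) ^ 2))⁻¹
        * ((σ x) ^ 2)⁻¹ * Real.exp (2 * ∫ v in (0:ℝ)..x, S v / (σ v) ^ 2))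
    (F : ℝ → ℝ) (hFm : Measurable F)
    (hFint : Integrable (fun x => |F x| * fS x))
    (ϑ : ℝ) (hϑ : ϑ = ∫ x : ℝ, F x * fS x)
    (M : ℝ → ℝ) (hM : ∀ y, M y = ∫ v in Set.Iic y, (F v - ϑ) * fS v)
    (J : ℝ) (hJ : J = ∫ y : ℝ, (M y) ^ 2 / ((σ y) ^ 2 * fS y))
    (hJfin : Integrable (fun y : ℝ => (M y) ^ 2 / ((σ y) ^ 2 * fS y)))
    (hJpos : 0 < J)
    (ψ : ℝ → ℝ) (hψc : Continuous ψ) (hψs : HasCompactSupport ψ)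
    (hconstraint : ∫ x : ℝ, (F x - ϑ) * (∫ v in (0:ℝ)..x, ψ v) * fS x = 1 / 2) :
    (4 * J)⁻¹ ≤ ∫ y : ℝ, (ψ y) ^ 2 * (σ y) ^ 2 * fS y := by
  -- notation
  set w : ℝ → ℝ := fun y => ((σ y) ^ 2)⁻¹ * Real.exp (2 * ∫ v in (0:ℝ)..y, S v / (σ v) ^ 2)
    with hw
  set G : ℝ := ∫ y : ℝ, w y with hG
  have hσne : ∀ x, σ x ≠ 0 := fun x => (hσpos x).ne'
  -- w is continuous and positive
  have hwc : Continuous w := by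
    apply Continuous.mul
    · exact (hσc.pow 2).inv₀ (fun x => pow_ne_zero _ (hσne x))
    · apply Real.continuous_exp.comp
      apply continuous_const.mul
      apply intervalIntegral.continuous_primitive
      intro a b
      exact (hSc.div (hσc.pow 2) (fun x => pow_ne_zero _ (hσne x))).intervalIntegrable a b
  have hwpos : ∀ x, 0 < w x := fun x =>
    mul_pos (inv_pos.2 (pow_pos (hσpos x) 2)) (Real.exp_pos _)
  -- G is positive
  have hGpos : 0 < G := by
    rw [hG, integral_pos_iff_support_of_nonneg (fun x => (hwpos x).le) hGfin]
    have : Function.support w = Set.univ := by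
      ext x; simp [Function.mem_support, (hwpos x).ne']
    rw [this]
    simp
  have hGne : G ≠ 0 := hGpos.ne'
  -- fS = G⁻¹ * w, continuous and positive
  have hfSw : ∀ x, fS x = G⁻¹ * w x := by
    intro x; rw [hfS x, hw]; ring
  have hfSc : Continuous fS := by
    have : fS = fun x => G⁻¹ * w x := funext hfSw
    rw [this]; exact continuous_const.mul hwc
  have hfSpos : ∀ x, 0 < fS x := fun x => by
    rw [hfSw x]; exact mul_pos (inv_pos.2 hGpos) (hwpos x)
  have hfSint : Integrable fS := by
    have : fS = fun x => G⁻¹ * w x := funext hfSw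
    rw [this]; exact hGfin.const_mul _
  have hintfS : ∫ x : ℝ, fS x = 1 := by
    have : ∫ x : ℝ, fS x = ∫ x : ℝ, G⁻¹ * w x := by
      congr 1; exact funext hfSw
    rw [this, MeasureTheory.integral_const_mul, ← hG, inv_mul_cancel₀ hGne]
  -- g := (F - ϑ) * fS
  set g : ℝ → ℝ := fun x => (F x - ϑ) * fS x with hg
  have hgm : Measurable g := (hFm.sub measurable_const).mul hfSc.measurable
  have hFfSint : Integrable (fun x => F x * fS x) := by
    refine hFint.mono' ((hFm.mul hfSc.measurable).aestronglyMeasurable) ?_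
    filter_upwards with x
    rw [Real.norm_eq_abs, abs_mul, abs_of_nonneg (hfSpos x).le]
  have hgint : Integrable g := by
    have : g = fun x => F x * fS x - ϑ * fS x := by funext x; rw [hg]; ring
    rw [this]
    exact hFfSint.sub (hfSint.const_mul ϑ)
  have hgzero : ∫ x : ℝ, g x = 0 := by
    have : ∫ x : ℝ, g x = (∫ x : ℝ, F x * fS x) - ∫ x : ℝ, ϑ * fS x := by
      rw [← integral_sub hFfSint (hfSint.const_mul ϑ)]
      congr 1; funext x; rw [hg]; ring
    rw [this, MeasureTheory.integral_const_mul, hintfS, ← hϑ]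
    ring
  -- M is continuous
  have hMg : ∀ y, M y = ∫ v in Set.Iic y, g v := hM
  have hMc : Continuous M := by
    have h1 : ∀ y, M y = (∫ v in (0:ℝ)..y, g v) + M 0 := by
      intro y
      rw [hMg y, hMg 0, ← integral_Iic_sub_Iic hgint.integrableOn hgint.integrableOn]
      ring
    have : M = fun y => (∫ v in (0:ℝ)..y, g v) + M 0 := funext h1
    rw [this]
    exact (hgint.continuous_primitive 0).add continuous_const
  -- M is bounded
  set C : ℝ := ∫ x : ℝ, |g x| with hC
  have hMbd : ∀ y, |M y| ≤ C := by
    intro y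
    rw [hMg y, hC]
    calc |∫ v in Set.Iic y, g v| ≤ ∫ v in Set.Iic y, |g v| := by
          simpa using norm_integral_le_integral_norm (μ := volume.restrict (Set.Iic y)) g
      _ ≤ ∫ x : ℝ, |g x| := setIntegral_le_integral hgint.norm
          (Filter.Eventually.of_forall fun x => abs_nonneg _)
  -- the kernel K
  set K : ℝ → ℝ → ℝ := fun x v => (if v ≤ x then (1:ℝ) else 0) - (if v ≤ 0 then (1:ℝ) else 0)
    with hK
  have hKbd : ∀ x v, |K x v| ≤ 1 := by
    intro x v; rw [hK]; dsimp only; split_ifs <;> norm_num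
  -- Claim A: interval integral of ψ expressed via K
  have hA : ∀ x, (∫ v in (0:ℝ)..x, ψ v) = ∫ v : ℝ, ψ v * K x v := by
    intro x
    rcases le_or_gt 0 x with hx | hx
    · have : (fun v => ψ v * K x v) = (Set.Ioc 0 x).indicator ψ := by
        funext v
        rw [hK]; dsimp only
        by_cases h1 : v ≤ 0
        · have h2 : v ≤ x := h1.trans hx
          simp [h1, h2, Set.indicator_apply, not_lt.2 h1]
        · by_cases h2 : v ≤ x
          · simp [h1, h2, Set.indicator_apply, lt_of_not_ge h1]
          · simp [h1, h2, Set.indicator_apply]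
      rw [this, MeasureTheory.integral_indicator measurableSet_Ioc,
        intervalIntegral.integral_of_le hx]
    · have : (fun v => ψ v * K x v) = fun v => -((Set.Ioc x 0).indicator ψ v) := by
        funext v
        rw [hK]; dsimp only
        by_cases h1 : v ≤ x
        · have h2 : v ≤ 0 := h1.trans hx.le
          simp [h1, h2, Set.indicator_apply, not_lt.2 h1]
        · by_cases h2 : v ≤ 0
          · simp [h1, h2, Set.indicator_apply, lt_of_not_ge h1]
          · simp [h1, h2, Set.indicator_apply]
      rw [this, MeasureTheory.integral_neg, MeasureTheory.integral_indicator measurableSet_Ioc,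
        intervalIntegral.integral_symm, intervalIntegral.integral_of_le hx.le]
  -- ψ is integrable
  have hψint : Integrable ψ := hψc.integrable_of_hasCompactSupport hψs
  -- Fubini: the product function is integrable
  have hprod : Integrable (Function.uncurry fun x v => g x * (ψ v * K x v))
      (volume.prod volume) := by
    have hbd : Integrable (fun p : ℝ × ℝ => |g p.1| * |ψ p.2|) (volume.prod volume) :=
      hgint.norm.mul_prod hψint.norm
    refine hbd.mono' ?_ ?_
    · apply Measurable.aestronglyMeasurable
      apply Measurable.mul
      · exact hgm.comp measurable_fst
      apply Measurable.mul
      · exact hψc.measurable.comp measurable_snd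
      · rw [hK]
        apply Measurable.sub
        · exact Measurable.ite (measurableSet_le measurable_snd measurable_fst)
            measurable_const measurable_const
        · exact Measurable.ite (measurableSet_le measurable_snd measurable_const)
            measurable_const measurable_const
    · filter_upwards with p
      simp only [Function.uncurry]
      calc ‖g p.1 * (ψ p.2 * K p.1 p.2)‖ = |g p.1| * (|ψ p.2| * |K p.1 p.2|) := by
            simp [Real.norm_eq_abs, abs_mul, mul_assoc]
        _ ≤ |g p.1| * (|ψ p.2| * 1) := by
            have := hKbd p.1 p.2
            gcongr <;> positivity
        _ = |g p.1| * |ψ p.2| := by ring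
  -- the inner integral in x for fixed v
  have hinner : ∀ v, (∫ x : ℝ, g x * K x v) = -(M v) := by
    intro v
    have h1 : (fun x => g x * (if v ≤ x then (1:ℝ) else 0)) = (Set.Ici v).indicator g := by
      funext x
      by_cases h : v ≤ x <;> simp [Set.indicator_apply, h]
    have hsplit : (∫ x : ℝ, g x * K x v)
        = (∫ x : ℝ, g x * (if v ≤ x then (1:ℝ) else 0))
          - ∫ x : ℝ, g x * (if v ≤ 0 then (1:ℝ) else 0) := by
      rw [← MeasureTheory.integral_sub]
      · congr 1; funext x; rw [hK]; ring
      · rw [h1]; exact hgint.indicator measurableSet_Ici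
      · by_cases h : v ≤ 0 <;> simp [h, hgint, integrable_zero]
    have h2 : (∫ x : ℝ, g x * (if v ≤ 0 then (1:ℝ) else 0)) = 0 := by
      by_cases h : v ≤ 0 <;> simp [h, hgzero]
    have h3 : (∫ x : ℝ, g x * (if v ≤ x then (1:ℝ) else 0)) = ∫ x in Set.Ici v, g x := by
      rw [h1, MeasureTheory.integral_indicator measurableSet_Ici]
    have h4 : (∫ x in Set.Iio v, g x) + (∫ x in Set.Ici v, g x) = ∫ x : ℝ, g x :=
      integral_Iio_add_Ici hgint.integrableOn hgint.integrableOn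
    have h5 : (∫ x in Set.Iio v, g x) = M v := by
      rw [hMg v, integral_Iic_eq_integral_Iio]
    rw [hsplit, h2, h3, sub_zero]
    rw [hgzero, h5] at h4
    linarith
  -- key identity: ∫ ψ M = -(1/2)
  have hkey : (∫ v : ℝ, ψ v * M v) = -(1/2) := by
    have e1 : (1:ℝ)/2 = ∫ x : ℝ, g x * ∫ v : ℝ, ψ v * K x v := by
      rw [← hconstraint]
      congr 1; funext x
      rw [← hA x, hg]; ring
    have e2 : (∫ x : ℝ, g x * ∫ v : ℝ, ψ v * K x v)
        = ∫ x : ℝ, ∫ v : ℝ, g x * (ψ v * K x v) := by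
      congr 1; funext x
      rw [MeasureTheory.integral_const_mul]
    have e3 : (∫ x : ℝ, ∫ v : ℝ, g x * (ψ v * K x v))
        = ∫ v : ℝ, ∫ x : ℝ, g x * (ψ v * K x v) := integral_integral_swap hprod
    have e4 : (∫ v : ℝ, ∫ x : ℝ, g x * (ψ v * K x v)) = ∫ v : ℝ, ψ v * (-(M v)) := by
      congr 1; funext v
      rw [← hinner v, ← MeasureTheory.integral_const_mul]
      congr 1; funext x; ring
    have e5 : (∫ v : ℝ, ψ v * (-(M v))) = -∫ v : ℝ, ψ v * M v := by
      rw [← MeasureTheory.integral_neg]; congr 1; funext v; ring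
    have := e1.trans (e2.trans (e3.trans (e4.trans e5)))
    linarith
  -- Cauchy-Schwarz via nonnegativity of a square
  set t : ℝ := 1 / (2 * J) with ht
  set q : ℝ → ℝ := fun y =>
    (ψ y * σ y * Real.sqrt (fS y) + t * (M y / (σ y * Real.sqrt (fS y)))) ^ 2 with hq
  have hsq : ∀ y, Real.sqrt (fS y) > 0 := fun y => Real.sqrt_pos.2 (hfSpos y)
  have hqexp : ∀ y, q y = ψ y ^ 2 * σ y ^ 2 * fS y + (2 * t) * (ψ y * M y)
      + t ^ 2 * (M y ^ 2 / (σ y ^ 2 * fS y)) := by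
    intro y
    have hb1 : σ y ≠ 0 := hσne y
    have hb2 : Real.sqrt (fS y) ≠ 0 := (hsq y).ne'
    have hs : Real.sqrt (fS y) ^ 2 = fS y := Real.sq_sqrt (hfSpos y).le
    rw [hq]; dsimp only
    rw [← hs]
    field_simp
    rw [Real.sqrt_sq (hsq y).le]
    ring
  -- integrabilities
  have hAint : Integrable (fun y => ψ y ^ 2 * σ y ^ 2 * fS y) := by
    apply Continuous.integrable_of_hasCompactSupport
    · exact ((hψc.pow 2).mul (hσc.pow 2)).mul hfSc
    · have h : (fun y => ψ y ^ 2 * σ y ^ 2 * fS y)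
          = fun y => ψ y * (ψ y * (σ y ^ 2 * fS y)) := by funext y; ring
      rw [h]; exact hψs.mul_right
  have hψMint : Integrable (fun y => ψ y * M y) :=
    (hψc.mul hMc).integrable_of_hasCompactSupport hψs.mul_right
  have h0 : (0:ℝ) ≤ ∫ y : ℝ, q y := integral_nonneg fun y => sq_nonneg _
  have hqint : (∫ y : ℝ, q y) = (∫ y : ℝ, ψ y ^ 2 * σ y ^ 2 * fS y)
      + (2 * t) * (∫ y : ℝ, ψ y * M y) + t ^ 2 * J := by
    have : (fun y => q y) = fun y => ψ y ^ 2 * σ y ^ 2 * fS y + (2 * t) * (ψ y * M y)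
        + t ^ 2 * (M y ^ 2 / (σ y ^ 2 * fS y)) := funext hqexp
    have i1 : Integrable (fun y => ψ y ^ 2 * σ y ^ 2 * fS y + (2 * t) * (ψ y * M y)) :=
      hAint.add (hψMint.const_mul _)
    have i2 : Integrable (fun y => t ^ 2 * (M y ^ 2 / (σ y ^ 2 * fS y))) :=
      hJfin.const_mul _
    rw [this, MeasureTheory.integral_add i1 i2,
      MeasureTheory.integral_add hAint (hψMint.const_mul _),
      MeasureTheory.integral_const_mul, MeasureTheory.integral_const_mul, hJ]
  rw [hqint, hkey] at h0
  have hJne : J ≠ 0 := hJpos.ne'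
  rw [ht] at h0
  have e : (∫ y : ℝ, ψ y ^ 2 * σ y ^ 2 * fS y) + 2 * (1 / (2 * J)) * -(1 / 2)
      + (1 / (2 * J)) ^ 2 * J = (∫ y : ℝ, ψ y ^ 2 * σ y ^ 2 * fS y) - 1 / (4 * J) := by
    field_simp
    ring
  rw [e] at h0
  rw [show (4 * J)⁻¹ = 1 / (4 * J) by rw [one_div]]
  linarith
end

section
/- Let σ be continuous and positive, S continuous, G(S) < ∞, f_S the invariant density, F measurable with ∫_ℝ |F| f_S < ∞, ϑ = ∫_ℝ F f_S, M(y) = ∫_{-∞}^y (F(v) − ϑ) f_S(v) dv, and suppose J := ∫_ℝ M(y)²/(σ(y)² f_S(y)) dy is finite and positive. Define ψ_*(v) = C·M(v)/(σ(v)² f_S(v)) with C = −(2J)^{-1}. Then ψ_* satisfies the constraint −∫_ℝ M(y) ψ_*(y) dy = 1/2 and achieves equality: ∫_ℝ ψ_*(y)² σ(y)² f_S(y) dy = I_* = (4J)^{-1}. -/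
open MeasureTheory Real Set Filter intervalIntegral

/-- In the setting of the nonparametric lower bound, with
`M(y) = ∫_{-∞}^y (F - ϑ) fS` and `J = ∫ M²/(σ² fS)` finite and positive, the extremal function
`ψ_*(v) = C · M(v)/(σ(v)² fS(v))` with `C = -(2J)⁻¹` satisfies the constraint
`-∫ M ψ_* = 1/2` and achieves equality `∫ ψ_*² σ² fS = I_* = (4J)⁻¹`. -/
theorem moment_estimation_stmt5
    (σ S : ℝ → ℝ)
    (hσc : Continuous σ) (hσpos : ∀ x, 0 < σ x)
    (hSc : Continuous S)
    (hGfin : Integrable (fun y : ℝ =>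
      ((σ y) ^ 2)⁻¹ * Real.exp (2 * ∫ v in (0:ℝ)..y, S v / (σ v) ^ 2)))
    (fS : ℝ → ℝ)
    (hfS : ∀ x, fS x =
      (∫ y : ℝ, ((σ y) ^ 2)⁻¹ * Real.exp (2 * ∫ v in (0:ℝ)..y, S v / (σ v) ^ 2))⁻¹
        * ((σ x) ^ 2)⁻¹ * Real.exp (2 * ∫ v in (0:ℝ)..x, S v / (σ v) ^ 2))
    (F : ℝ → ℝ) (hFm : Measurable F)
    (hFint : Integrable (fun x => |F x| * fS x))
    (ϑ : ℝ) (hϑ : ϑ = ∫ x : ℝ, F x * fS x)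
    (M : ℝ → ℝ) (hM : ∀ y, M y = ∫ v in Set.Iic y, (F v - ϑ) * fS v)
    (J : ℝ) (hJ : J = ∫ y : ℝ, (M y) ^ 2 / ((σ y) ^ 2 * fS y))
    (hJfin : Integrable (fun y : ℝ => (M y) ^ 2 / ((σ y) ^ 2 * fS y)))
    (hJpos : 0 < J)
    (C : ℝ) (hC : C = -(2 * J)⁻¹)
    (ψstar : ℝ → ℝ)
    (hψstar : ∀ v, ψstar v = C * M v / ((σ v) ^ 2 * fS v)) :
    (- ∫ y : ℝ, M y * ψstar y) = 1 / 2 ∧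
      ∫ y : ℝ, (ψstar y) ^ 2 * (σ y) ^ 2 * fS y = (4 * J)⁻¹ := by
  set g : ℝ → ℝ := fun y => ((σ y) ^ 2)⁻¹ * Real.exp (2 * ∫ v in (0:ℝ)..y, S v / (σ v) ^ 2)
    with hg
  have hgpos : ∀ y, 0 < g y := fun y =>
    mul_pos (inv_pos.2 (pow_pos (hσpos y) 2)) (Real.exp_pos _)
  have hGpos : 0 < ∫ y : ℝ, g y := by
    rw [integral_pos_iff_support_of_nonneg_ae (Filter.Eventually.of_forall fun y => (hgpos y).le)
      hGfin]
    have : Function.support g = Set.univ := by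
      ext y; simp [Function.mem_support, (hgpos y).ne']
    rw [this]
    simp
  have hfSpos : ∀ x, 0 < fS x := by
    intro x
    rw [hfS x]
    exact mul_pos (mul_pos (inv_pos.2 hGpos) (inv_pos.2 (pow_pos (hσpos x) 2))) (Real.exp_pos _)
  have hdne : ∀ y, (σ y) ^ 2 * fS y ≠ 0 := fun y =>
    (mul_pos (pow_pos (hσpos y) 2) (hfSpos y)).ne'
  have h1 : (∫ y : ℝ, M y * ψstar y) = C * J := by
    have : (fun y => M y * ψstar y) = fun y => C * ((M y) ^ 2 / ((σ y) ^ 2 * fS y)) := by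
      funext y
      rw [hψstar y]
      field_simp
    rw [this, MeasureTheory.integral_const_mul, hJ]
  have h2 : (fun y => (ψstar y) ^ 2 * (σ y) ^ 2 * fS y)
      = fun y => C ^ 2 * ((M y) ^ 2 / ((σ y) ^ 2 * fS y)) := by
    funext y
    rw [hψstar y]
    field_simp [(hσpos y).ne', (hfSpos y).ne']
  constructor
  · rw [h1, hC]
    field_simp
  · rw [h2, MeasureTheory.integral_const_mul, ← hJ, hC]
    rw [neg_pow, mul_inv, ← mul_inv]
    field_simp
    ring
end

section
/- Let σ be continuous and positive, S continuous, G(S) < ∞, f_S the invariant density, F continuous with ∫_ℝ |F| f_S < ∞, ϑ = ∫_ℝ F f_S, M(y) = ∫_{-∞}^y (F(v) − ϑ) f_S(v) dv. Suppose M/(σ² f_S) is not identically zero and J := ∫_ℝ M(y)²/(σ(y)² f_S(y)) dy < ∞. Then the infimum of ∫_ℝ ψ(y)² σ(y)² f_S(y) dy over all continuous compactly supported ψ satisfying ∫_ℝ (F(x) − ϑ)(∫_0^x ψ(v) dv) f_S(x) dx = 1/2 equals I_* = (4J)^{-1}. -/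
open MeasureTheory Real Set Filter intervalIntegral Topology

lemma cs_integral {f g : ℝ → ℝ} (hf2 : Integrable (fun x => f x ^ 2))
    (hg2 : Integrable (fun x => g x ^ 2)) (hfg : Integrable (fun x => f x * g x)) :
    (∫ x, f x * g x) ^ 2 ≤ (∫ x, f x ^ 2) * (∫ x, g x ^ 2) := by
  set A := ∫ x, g x ^ 2 with hA
  set B := ∫ x, f x * g x with hB
  set C := ∫ x, f x ^ 2 with hC
  have key : ∀ t : ℝ, 0 ≤ A * (t * t) + (2 * B) * t + C := by
    intro t
    have h2 : 0 ≤ ∫ x, t ^ 2 * g x ^ 2 + (2 * t) * (f x * g x) + f x ^ 2 := by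
      refine integral_nonneg fun x => ?_
      have : t ^ 2 * g x ^ 2 + (2 * t) * (f x * g x) + f x ^ 2 = (t * g x + f x) ^ 2 := by ring
      rw [this]; positivity
    have h1a : Integrable (fun x => t ^ 2 * g x ^ 2 + (2 * t) * (f x * g x)) :=
      (hg2.const_mul _).add (hfg.const_mul _)
    have h1b : Integrable (fun x => t ^ 2 * g x ^ 2) := hg2.const_mul _
    have h1c : Integrable (fun x => (2 * t) * (f x * g x)) := hfg.const_mul _
    rw [integral_add h1a hf2, integral_add h1b h1c, MeasureTheory.integral_const_mul, MeasureTheory.integral_const_mul] at h2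
    nlinarith [h2]
  have hd := discrim_le_zero key
  rw [discrim] at hd
  nlinarith [hd]

/-- With σ continuous and positive, S continuous, G(S) < ∞, `fS` the invariant
density, `F` continuous with `∫ |F| fS < ∞`, `ϑ = ∫ F fS`, `M(y) = ∫_{-∞}^y (F - ϑ) fS`,
`M/(σ² fS)` not identically zero, and `J = ∫ M²/(σ² fS) < ∞`: the infimum of
`∫ ψ² σ² fS` over all continuous compactly supported `ψ` with
`∫ (F(x) - ϑ)(∫_0^x ψ) fS(x) dx = 1/2` equals `I_* = (4J)⁻¹`. -/
theorem moment_estimation_stmt6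
    (σ S : ℝ → ℝ)
    (hσc : Continuous σ) (hσpos : ∀ x, 0 < σ x)
    (hSc : Continuous S)
    (hGfin : Integrable (fun y : ℝ =>
      ((σ y) ^ 2)⁻¹ * Real.exp (2 * ∫ v in (0:ℝ)..y, S v / (σ v) ^ 2)))
    (fS : ℝ → ℝ)
    (hfS : ∀ x, fS x =
      (∫ y : ℝ, ((σ y) ^ 2)⁻¹ * Real.exp (2 * ∫ v in (0:ℝ)..y, S v / (σ v) ^ 2))⁻¹
        * ((σ x) ^ 2)⁻¹ * Real.exp (2 * ∫ v in (0:ℝ)..x, S v / (σ v) ^ 2))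
    (F : ℝ → ℝ) (hFc : Continuous F)
    (hFint : Integrable (fun x => |F x| * fS x))
    (ϑ : ℝ) (hϑ : ϑ = ∫ x : ℝ, F x * fS x)
    (M : ℝ → ℝ) (hM : ∀ y, M y = ∫ v in Set.Iic y, (F v - ϑ) * fS v)
    (hMnonzero : ¬ (∀ y : ℝ, M y / ((σ y) ^ 2 * fS y) = 0))
    (J : ℝ) (hJ : J = ∫ y : ℝ, (M y) ^ 2 / ((σ y) ^ 2 * fS y))
    (hJfin : Integrable (fun y : ℝ => (M y) ^ 2 / ((σ y) ^ 2 * fS y))) :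
    IsGLB {r : ℝ | ∃ ψ : ℝ → ℝ, Continuous ψ ∧ HasCompactSupport ψ ∧
        (∫ x : ℝ, (F x - ϑ) * (∫ v in (0:ℝ)..x, ψ v) * fS x = 1 / 2) ∧
        r = ∫ y : ℝ, (ψ y) ^ 2 * (σ y) ^ 2 * fS y}
      ((4 * J)⁻¹) := by
  -- basic positivity / continuity facts
  have hσne : ∀ x, (σ x) ^ 2 ≠ 0 := fun x => pow_ne_zero 2 (hσpos x).ne'
  have hqc : Continuous fun v => S v / (σ v) ^ 2 := hSc.div (hσc.pow 2) hσne
  have hPd : ∀ y : ℝ, HasDerivAt (fun y => ∫ v in (0:ℝ)..y, S v / (σ v) ^ 2)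
      (S y / (σ y) ^ 2) y := fun y =>
    intervalIntegral.integral_hasDerivAt_right (hqc.intervalIntegrable _ _)
      (hqc.stronglyMeasurableAtFilter _ _) hqc.continuousAt
  have hPc : Continuous fun y : ℝ => ∫ v in (0:ℝ)..y, S v / (σ v) ^ 2 :=
    continuous_iff_continuousAt.2 fun y => (hPd y).continuousAt
  set g0 : ℝ → ℝ := fun y => ((σ y) ^ 2)⁻¹ * Real.exp (2 * ∫ v in (0:ℝ)..y, S v / (σ v) ^ 2)
    with hg0
  have hg0c : Continuous g0 := ((hσc.pow 2).inv₀ hσne).mul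
    (Real.continuous_exp.comp (continuous_const.mul hPc))
  have hg0pos : ∀ y, 0 < g0 y := fun y =>
    mul_pos (inv_pos.2 (pow_pos (hσpos y) 2)) (Real.exp_pos _)
  set G : ℝ := ∫ y, g0 y with hG
  have hGpos : 0 < G := by
    rw [hG]
    rw [integral_pos_iff_support_of_nonneg (fun y => (hg0pos y).le) hGfin]
    have : Function.support g0 = Set.univ := Set.eq_univ_of_forall fun y => (hg0pos y).ne'
    rw [this]
    simp
  have hfS' : ∀ x, fS x = G⁻¹ * g0 x := by
    intro x; rw [hfS x]; rw [hg0]; ring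
  have hfSc : Continuous fS := by
    have : fS = fun x => G⁻¹ * g0 x := funext hfS'
    rw [this]; exact continuous_const.mul hg0c
  have hfSpos : ∀ x, 0 < fS x := fun x => by
    rw [hfS' x]; exact mul_pos (inv_pos.2 hGpos) (hg0pos x)
  have hfSint : Integrable fS := by
    have : fS = fun x => G⁻¹ * g0 x := funext hfS'
    rw [this]; exact hGfin.const_mul _
  have hfS1 : ∫ x, fS x = 1 := by
    have : ∫ x, fS x = ∫ x, G⁻¹ * g0 x := by congr 1; exact funext hfS'
    rw [this, MeasureTheory.integral_const_mul, ← hG, inv_mul_cancel₀ hGpos.ne']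
  -- the function h = (F - ϑ) fS
  set h : ℝ → ℝ := fun x => (F x - ϑ) * fS x with hh
  have hhc : Continuous h := (hFc.sub continuous_const).mul hfSc
  have hFfS : Integrable (fun x => F x * fS x) := by
    refine (hFint.mono' ((hFc.mul hfSc).aestronglyMeasurable) ?_)
    filter_upwards with x
    rw [Real.norm_eq_abs, abs_mul, abs_of_nonneg (hfSpos x).le]
  have hhint : Integrable h := by
    have : h = fun x => F x * fS x - ϑ * fS x := by funext x; rw [hh]; ring
    rw [this]; exact hFfS.sub (hfSint.const_mul _)
  have hhzero : ∫ x, h x = 0 := by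
    have e : ∫ x, h x = (∫ x, F x * fS x) - ∫ x, ϑ * fS x := by
      have : h = fun x => F x * fS x - ϑ * fS x := by funext x; rw [hh]; ring
      rw [this, integral_sub hFfS (hfSint.const_mul _)]
    rw [e, MeasureTheory.integral_const_mul, hfS1, ← hϑ]; ring
  -- M as primitive of h
  have hMrepr : ∀ y, M y = M 0 + ∫ t in (0:ℝ)..y, h t := by
    intro y
    have h2 := integral_Iic_sub_Iic (μ := volume) (f := h) (hhint.integrableOn)
      (hhint.integrableOn) (a := 0) (b := y)
    rw [← hM y, ← hM 0] at h2
    linarith [h2]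
  have hMd : ∀ y, HasDerivAt M (h y) y := by
    intro y
    have : HasDerivAt (fun y => M 0 + ∫ t in (0:ℝ)..y, h t) (h y) y := by
      refine HasDerivAt.const_add _ ?_
      exact intervalIntegral.integral_hasDerivAt_right (hhc.intervalIntegrable _ _)
        (hhc.stronglyMeasurableAtFilter _ _) hhc.continuousAt
    exact this.congr_of_eventuallyEq (Filter.Eventually.of_forall fun x => (hMrepr x))
  have hMc : Continuous M := continuous_iff_continuousAt.2 fun y => (hMd y).continuousAt
  have hIoi : ∀ A : ℝ, ∫ x in Set.Ioi A, h x = - M A := by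
    intro A
    have := integral_Iic_add_Ioi (b := A) (hhint.integrableOn) (hhint.integrableOn)
    rw [hhzero] at this
    rw [hM A]
    linarith [this]
  -- Key integration by parts identity
  have key : ∀ ψ : ℝ → ℝ, Continuous ψ → HasCompactSupport ψ →
      (∫ x : ℝ, (F x - ϑ) * (∫ v in (0:ℝ)..x, ψ v) * fS x) = - ∫ x, M x * ψ x := by
    intro ψ hψc hψs
    obtain ⟨R, hR⟩ := hψs.isBounded.subset_closedBall 0
    set B := |R| + 1 with hBdef
    have hψz : ∀ v : ℝ, B ≤ |v| → ψ v = 0 := by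
      intro v hv
      by_contra hne
      have : v ∈ tsupport ψ := subset_tsupport ψ hne
      have := hR this
      rw [Metric.mem_closedBall, Real.dist_eq, sub_zero] at this
      have : |v| ≤ |R| := this.trans (le_abs_self R)
      linarith
    have hBpos : 0 < B := by positivity
    set Ψ : ℝ → ℝ := fun x => ∫ v in (0:ℝ)..x, ψ v with hΨdef
    have hΨd : ∀ x, HasDerivAt Ψ (ψ x) x := fun x =>
      intervalIntegral.integral_hasDerivAt_right (hψc.intervalIntegrable _ _)
        (hψc.stronglyMeasurableAtFilter _ _) hψc.continuousAt
    have hΨc : Continuous Ψ := continuous_iff_continuousAt.2 fun y => (hΨd y).continuousAt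
    have hconstL : ∀ x ≤ -B, Ψ x = Ψ (-B) := by
      intro x hx
      have : Ψ (-B) - Ψ x = ∫ v in x..(-B), ψ v := by
        have h2 := intervalIntegral.integral_interval_sub_left (μ := volume) (a := (0:ℝ)) (b := -B) (c := x)
          (hψc.intervalIntegrable _ _) (hψc.intervalIntegrable _ _)
        simpa [hΨdef] using h2
      have hz : ∫ v in x..(-B), ψ v = 0 := by
        have heq : Set.EqOn ψ (fun _ => (0:ℝ)) (Set.uIcc x (-B)) := by
          intro v hv
          rw [Set.uIcc_of_le hx] at hv
          refine hψz v ?_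
          have h3 : B ≤ -v := by linarith [hv.2]
          exact h3.trans (neg_le_abs v)
        rw [intervalIntegral.integral_congr heq]
        simp
      linarith [this, hz]
    have hconstR : ∀ x, B ≤ x → Ψ x = Ψ B := by
      intro x hx
      have : Ψ x - Ψ B = ∫ v in B..x, ψ v := by
        have h2 := intervalIntegral.integral_interval_sub_left (μ := volume) (a := (0:ℝ)) (b := x) (c := B)
          (hψc.intervalIntegrable _ _) (hψc.intervalIntegrable _ _)
        simpa [hΨdef] using h2
      have hz : ∫ v in B..x, ψ v = 0 := by
        have heq : Set.EqOn ψ (fun _ => (0:ℝ)) (Set.uIcc B x) := by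
          intro v hv
          rw [Set.uIcc_of_le hx] at hv
          exact hψz v (le_trans hv.1 (le_abs_self v))
        rw [intervalIntegral.integral_congr heq]
        simp
      linarith [this, hz]
    -- Ψ is bounded
    obtain ⟨C, hC⟩ := (isCompact_Icc (a := -B) (b := B)).exists_bound_of_continuousOn
      hΨc.continuousOn
    have hΨbdd : ∀ x, ‖Ψ x‖ ≤ C := by
      intro x
      rcases le_total x (-B) with hx | hx
      · rw [hconstL x hx]; exact hC _ ⟨le_refl _, by linarith⟩
      rcases le_total B x with hx' | hx'
      · rw [hconstR x hx']; exact hC _ ⟨by linarith, le_refl _⟩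
      · exact hC _ ⟨by linarith, hx'⟩
    have hhΨint : Integrable (fun x => h x * Ψ x) := by
      have := hhint.bdd_mul hΨc.aestronglyMeasurable (Filter.Eventually.of_forall hΨbdd)
      exact this.congr (Filter.Eventually.of_forall fun x => by ring)
    -- split the integral
    have hsplit1 : (∫ x in Set.Iic B, h x * Ψ x) + (∫ x in Set.Ioi B, h x * Ψ x)
        = ∫ x, h x * Ψ x := integral_Iic_add_Ioi hhΨint.integrableOn hhΨint.integrableOn
    have hsplit2 : (∫ x in Set.Iic B, h x * Ψ x) - ∫ x in Set.Iic (-B), h x * Ψ x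
        = ∫ x in (-B)..B, h x * Ψ x :=
      integral_Iic_sub_Iic hhΨint.integrableOn hhΨint.integrableOn
    -- left piece
    have hleft : ∫ x in Set.Iic (-B), h x * Ψ x = M (-B) * Ψ (-B) := by
      have : ∫ x in Set.Iic (-B), h x * Ψ x = ∫ x in Set.Iic (-B), h x * Ψ (-B) := by
        refine setIntegral_congr_fun measurableSet_Iic fun x hx => ?_
        rw [hconstL x hx]
      rw [this, MeasureTheory.integral_mul_const, ← hM]
    -- right piece
    have hright : ∫ x in Set.Ioi B, h x * Ψ x = (- M B) * Ψ B := by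
      have : ∫ x in Set.Ioi B, h x * Ψ x = ∫ x in Set.Ioi B, h x * Ψ B := by
        refine setIntegral_congr_fun measurableSet_Ioi fun x hx => ?_
        rw [hconstR x (le_of_lt hx)]
      rw [this, MeasureTheory.integral_mul_const, hIoi]
    -- integration by parts on [-B, B]
    have hibp : ∫ x in (-B)..B, Ψ x * h x
        = Ψ B * M B - Ψ (-B) * M (-B) - ∫ x in (-B)..B, ψ x * M x := by
      exact intervalIntegral.integral_mul_deriv_eq_deriv_mul
        (fun x _ => hΨd x) (fun x _ => hMd x)
        (hψc.intervalIntegrable _ _) (hhc.intervalIntegrable _ _)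
    -- ψ M integral over ℝ equals the interval integral
    have hψMint : Integrable (fun x => ψ x * M x) :=
      (hψc.mul hMc).integrable_of_hasCompactSupport
        (HasCompactSupport.intro hψs fun x hx => by
          have : ψ x = 0 := image_eq_zero_of_notMem_tsupport hx
          simp [this])
    have hψM_eq : ∫ x in (-B)..B, ψ x * M x = ∫ x, ψ x * M x := by
      have s1 : (∫ x in Set.Iic B, ψ x * M x) + (∫ x in Set.Ioi B, ψ x * M x)
          = ∫ x, ψ x * M x := integral_Iic_add_Ioi hψMint.integrableOn hψMint.integrableOn
      have s2 : (∫ x in Set.Iic B, ψ x * M x) - ∫ x in Set.Iic (-B), ψ x * M x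
          = ∫ x in (-B)..B, ψ x * M x :=
        integral_Iic_sub_Iic hψMint.integrableOn hψMint.integrableOn
      have z1 : ∫ x in Set.Ioi B, ψ x * M x = 0 := by
        rw [setIntegral_eq_zero_of_forall_eq_zero]
        intro x hx
        rw [hψz x (le_trans (le_of_lt hx) (le_abs_self x))]; ring
      have z2 : ∫ x in Set.Iic (-B), ψ x * M x = 0 := by
        rw [setIntegral_eq_zero_of_forall_eq_zero]
        intro x hx
        rw [Set.mem_Iic] at hx
        have h3 : B ≤ -x := by linarith
        rw [hψz x (h3.trans (neg_le_abs x))]; ring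
      linarith [s1, s2, z1, z2]
    have comm : ∫ x in (-B)..B, h x * Ψ x = ∫ x in (-B)..B, Ψ x * h x :=
      intervalIntegral.integral_congr fun x _ => mul_comm _ _
    have lhs_eq : ∫ x : ℝ, (F x - ϑ) * Ψ x * fS x = ∫ x, h x * Ψ x := by
      congr 1; funext x; simp only [hh]; ring
    have rhs_eq : ∫ x, M x * ψ x = ∫ x, ψ x * M x := by
      congr 1; funext x; ring
    rw [lhs_eq, rhs_eq]
    linarith [hsplit1, hsplit2, hleft, hright, hibp, comm, hψM_eq]
  -- J is positive
  set q : ℝ → ℝ := fun y => (M y) ^ 2 / ((σ y) ^ 2 * fS y) with hqdef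
  have hden : ∀ y, 0 < (σ y) ^ 2 * fS y := fun y => mul_pos (pow_pos (hσpos y) 2) (hfSpos y)
  have hqnn : ∀ y, 0 ≤ q y := fun y => div_nonneg (sq_nonneg _) (hden y).le
  have hqcont : Continuous q := (hMc.pow 2).div ((hσc.pow 2).mul hfSc)
    (fun y => (hden y).ne')
  have hJpos : 0 < J := by
    rw [hJ]
    have hInt : Integrable q := hJfin
    rw [show (∫ y : ℝ, (M y) ^ 2 / ((σ y) ^ 2 * fS y)) = ∫ y, q y from rfl,
      integral_pos_iff_support_of_nonneg hqnn hInt]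
    push_neg at hMnonzero
    obtain ⟨y0, hy0⟩ := hMnonzero
    have hMy0 : M y0 ≠ 0 := by
      intro hz; exact hy0 (by rw [hz, zero_div])
    have hq0 : 0 < q y0 := by
      have h2 : 0 < M y0 ^ 2 := by rcases lt_or_gt_of_ne hMy0 with h' | h' <;> nlinarith
      exact div_pos h2 (hden y0)
    have hU : IsOpen {y : ℝ | 0 < q y} := isOpen_lt continuous_const hqcont
    have hUpos : 0 < volume {y : ℝ | 0 < q y} := hU.measure_pos volume ⟨y0, hq0⟩
    exact lt_of_lt_of_le hUpos (measure_mono fun y hy => ne_of_gt hy)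
  set φ : ℝ → ℝ := fun y => M y / ((σ y) ^ 2 * fS y) with hφdef
  have hφc : Continuous φ := hMc.div ((hσc.pow 2).mul hfSc) (fun y => (hden y).ne')
  have idq1 : ∀ y, M y * φ y = q y := fun y => by
    simp only [hφdef, hqdef]; ring
  have idq2 : ∀ y, (φ y) ^ 2 * (σ y) ^ 2 * fS y = q y := fun y => by
    simp only [hφdef, hqdef]
    rw [div_pow, div_mul_eq_mul_div, div_mul_eq_mul_div,
      div_eq_div_iff (pow_ne_zero 2 (hden y).ne') (hden y).ne']
    ring
  constructor
  · -- lower bound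
    rintro r ⟨ψ, hψc, hψs, hcon, hr⟩
    have hMψ : ∫ x, M x * ψ x = -(1/2) := by
      have h2 := key ψ hψc hψs
      rw [hcon] at h2
      linarith
    have hsq : ∀ y, (σ y * Real.sqrt (fS y)) ^ 2 = (σ y) ^ 2 * fS y := fun y => by
      rw [mul_pow, Real.sq_sqrt (hfSpos y).le]
    have hnez : ∀ y, σ y * Real.sqrt (fS y) ≠ 0 := fun y =>
      (mul_pos (hσpos y) (Real.sqrt_pos.2 (hfSpos y))).ne'
    set f1 : ℝ → ℝ := fun y => M y / (σ y * Real.sqrt (fS y)) with hf1def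
    set f2 : ℝ → ℝ := fun y => ψ y * (σ y * Real.sqrt (fS y)) with hf2def
    have e12 : ∀ y, f1 y * f2 y = M y * ψ y := fun y => by
      simp only [hf1def, hf2def]
      rw [div_mul_eq_mul_div, eq_comm, eq_div_iff (hnez y)]
      ring
    have e1 : ∀ y, f1 y ^ 2 = q y := fun y => by
      simp only [hf1def, hqdef, div_pow, hsq y]
    have e2 : ∀ y, f2 y ^ 2 = ψ y ^ 2 * (σ y) ^ 2 * fS y := fun y => by
      simp only [hf2def, mul_pow, Real.sq_sqrt (hfSpos y).le]; ring
    have hf12 : Integrable (fun y => f1 y ^ 2) :=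
      (hJfin : Integrable q).congr (Filter.Eventually.of_forall fun y => (e1 y).symm)
    have hf22 : Integrable (fun y => f2 y ^ 2) := by
      have hc : Continuous fun y => f2 y ^ 2 :=
        ((hψc.mul (hσc.mul (Real.continuous_sqrt.comp hfSc))).pow 2)
      refine hc.integrable_of_hasCompactSupport
        (HasCompactSupport.intro hψs fun x hx => ?_)
      have : ψ x = 0 := image_eq_zero_of_notMem_tsupport hx
      simp [hf2def, this]
    have hff : Integrable (fun y => f1 y * f2 y) := by
      have hMψint : Integrable (fun y => M y * ψ y) := by
        refine (hMc.mul hψc).integrable_of_hasCompactSupport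
          (HasCompactSupport.intro hψs fun x hx => ?_)
        have : ψ x = 0 := image_eq_zero_of_notMem_tsupport hx
        simp [this]
      exact hMψint.congr (Filter.Eventually.of_forall fun y => (e12 y).symm)
    have CS := cs_integral hf12 hf22 hff
    have c1 : ∫ y, f1 y * f2 y = -(1/2) := by
      rw [← hMψ]; congr 1; funext y; exact e12 y
    have c2 : ∫ y, f1 y ^ 2 = J := by
      rw [hJ]; congr 1; funext y; exact e1 y
    have c3 : ∫ y, f2 y ^ 2 = r := by
      rw [hr]; congr 1; funext y; exact e2 y
    rw [c1, c2, c3] at CS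
    rw [inv_eq_one_div, div_le_iff₀ (by linarith : (0:ℝ) < 4 * J)]
    nlinarith [CS]
  · -- b ≤ (4J)⁻¹ for every lower bound b
    intro b hb
    set χ : ℕ → ℝ → ℝ := fun n y => max 0 (min 1 ((n : ℝ) + 1 - |y|)) with hχdef
    have hχc : ∀ n, Continuous (χ n) := fun n =>
      continuous_const.max (continuous_const.min (continuous_const.sub continuous_abs))
    have hχ01 : ∀ n y, 0 ≤ χ n y ∧ χ n y ≤ 1 := fun n y =>
      ⟨le_max_left _ _, max_le zero_le_one (min_le_left _ _)⟩
    have hχ1 : ∀ (y : ℝ) (n : ℕ), |y| ≤ (n : ℝ) → χ n y = 1 := by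
      intro y n hn
      have h2 : (1 : ℝ) ≤ (n : ℝ) + 1 - |y| := by linarith
      simp only [hχdef]
      rw [min_eq_left h2, max_eq_right zero_le_one]
    have hχ0 : ∀ (n : ℕ) (y : ℝ), (n : ℝ) + 1 ≤ |y| → χ n y = 0 := by
      intro n y hn
      have h2 : (n : ℝ) + 1 - |y| ≤ 0 := by linarith
      simp only [hχdef]
      rw [max_eq_left ((min_le_right _ _).trans h2)]
    -- the two sequences of integrals
    set c : ℕ → ℝ := fun n => ∫ y, q y * χ n y with hcdef
    set d : ℕ → ℝ := fun n => ∫ y, q y * (χ n y) ^ 2 with hddef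
    have hbnd : ∀ (n : ℕ) (y : ℝ), ‖q y * χ n y‖ ≤ q y := by
      intro n y
      rw [Real.norm_eq_abs, abs_of_nonneg (mul_nonneg (hqnn y) (hχ01 n y).1)]
      calc q y * χ n y ≤ q y * 1 := mul_le_mul_of_nonneg_left (hχ01 n y).2 (hqnn y)
        _ = q y := mul_one _
    have hbnd2 : ∀ (n : ℕ) (y : ℝ), ‖q y * (χ n y) ^ 2‖ ≤ q y := by
      intro n y
      rw [Real.norm_eq_abs, abs_of_nonneg (mul_nonneg (hqnn y) (sq_nonneg _))]
      have h2 : (χ n y) ^ 2 ≤ 1 := by nlinarith [(hχ01 n y).1, (hχ01 n y).2]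
      calc q y * (χ n y) ^ 2 ≤ q y * 1 := mul_le_mul_of_nonneg_left h2 (hqnn y)
        _ = q y := mul_one _
    have hχlim : ∀ y : ℝ, Filter.Tendsto (fun n : ℕ => χ n y) atTop (𝓝 1) := by
      intro y
      refine Filter.Tendsto.congr' ?_ tendsto_const_nhds
      filter_upwards [Filter.eventually_ge_atTop ⌈|y|⌉₊] with n hn
      exact (hχ1 y n ((Nat.le_ceil _).trans (by exact_mod_cast hn))).symm
    have htendc : Filter.Tendsto c atTop (𝓝 J) := by
      have hJq : J = ∫ y, q y := hJ
      rw [hJq]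
      refine tendsto_integral_of_dominated_convergence q
        (fun n => ((hqcont.mul (hχc n)).aestronglyMeasurable)) hJfin
        (fun n => Filter.Eventually.of_forall (hbnd n)) ?_
      refine Filter.Eventually.of_forall fun y => ?_
      have := (hχlim y).const_mul (q y)
      simpa using this
    have htendd : Filter.Tendsto d atTop (𝓝 J) := by
      have hJq : J = ∫ y, q y := hJ
      rw [hJq]
      refine tendsto_integral_of_dominated_convergence q
        (fun n => ((hqcont.mul ((hχc n).pow 2)).aestronglyMeasurable)) hJfin
        (fun n => Filter.Eventually.of_forall (hbnd2 n)) ?_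
      refine Filter.Eventually.of_forall fun y => ?_
      have h2 : Filter.Tendsto (fun n : ℕ => (χ n y) ^ 2) atTop (𝓝 1) := by
        have := (hχlim y).pow 2
        simpa using this
      have := h2.const_mul (q y)
      simpa using this
    have hev : ∀ᶠ n in (atTop : Filter ℕ), 0 < c n := by
      have hmem : {x : ℝ | 0 < x} ∈ 𝓝 J :=
        (isOpen_lt continuous_const continuous_id).mem_nhds hJpos
      exact htendc hmem
    have hbr : ∀ᶠ n in (atTop : Filter ℕ), b ≤ ((2 * c n)⁻¹) ^ 2 * d n := by
      filter_upwards [hev] with n hn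
      set a : ℝ := (2 * c n)⁻¹ with hadef
      set ψ : ℝ → ℝ := fun y => -a * (φ y * χ n y) with hψdef
      have hψcont : Continuous ψ := (continuous_const.mul (hφc.mul (hχc n)))
      have hψsupp : HasCompactSupport ψ := by
        refine HasCompactSupport.intro (isCompact_Icc (a := -((n : ℝ) + 1)) (b := (n : ℝ) + 1))
          fun x hx => ?_
        have habs : (n : ℝ) + 1 ≤ |x| := by
          by_contra hcon
          push_neg at hcon
          exact hx ⟨by linarith [neg_abs_le x], by linarith [le_abs_self x]⟩
        simp [hψdef, hχ0 n x habs]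
      have hMg : ∫ x, M x * ψ x = -a * c n := by
        have e : ∀ x, M x * ψ x = -a * (q x * χ n x) := fun x => by
          simp only [hψdef]
          rw [show M x * (-a * (φ x * χ n x)) = -a * ((M x * φ x) * χ n x) by ring, idq1 x]
        rw [show (fun x => M x * ψ x) = fun x => -a * (q x * χ n x) from funext e]
        rw [MeasureTheory.integral_const_mul]
      have hcon2 : ∫ x : ℝ, (F x - ϑ) * (∫ v in (0:ℝ)..x, ψ v) * fS x = 1 / 2 := by
        rw [key ψ hψcont hψsupp, hMg, hadef]
        field_simp
      have hval : ((2 * c n)⁻¹) ^ 2 * d n = ∫ y, (ψ y) ^ 2 * (σ y) ^ 2 * fS y := by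
        have e : ∀ y, (ψ y) ^ 2 * (σ y) ^ 2 * fS y = a ^ 2 * (q y * (χ n y) ^ 2) := fun y => by
          simp only [hψdef]
          rw [show (-a * (φ y * χ n y)) ^ 2 * (σ y) ^ 2 * fS y
            = a ^ 2 * (((φ y) ^ 2 * (σ y) ^ 2 * fS y) * (χ n y) ^ 2) by ring, idq2 y]
        rw [show (fun y => (ψ y) ^ 2 * (σ y) ^ 2 * fS y)
          = fun y => a ^ 2 * (q y * (χ n y) ^ 2) from funext e]
        rw [MeasureTheory.integral_const_mul, ← hadef, hddef]
      exact hb ⟨ψ, hψcont, hψsupp, hcon2, hval⟩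
    have htend : Filter.Tendsto (fun n => ((2 * c n)⁻¹) ^ 2 * d n) atTop (𝓝 ((4 * J)⁻¹)) := by
      have t1 : Filter.Tendsto (fun n => 2 * c n) atTop (𝓝 (2 * J)) := htendc.const_mul 2
      have t2 : Filter.Tendsto (fun n => (2 * c n)⁻¹) atTop (𝓝 ((2 * J)⁻¹)) :=
        t1.inv₀ (ne_of_gt (by linarith : (0:ℝ) < 2 * J))
      have t3 := (t2.pow 2).mul htendd
      have : ((2 * J)⁻¹) ^ 2 * J = (4 * J)⁻¹ := by
        have hJne : J ≠ 0 := hJpos.ne'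
        field_simp
        ring
      rwa [this] at t3
    exact ge_of_tendsto htend hbr
end

section
/- Let σ be continuous and positive, S_* continuous with G(S_*) < ∞, f_* the invariant density of S_*, F measurable with ∫_ℝ |F| f_* < ∞, and ϑ_* = ∫_ℝ F f_*. Let ψ be continuous with compact support and set S_ε = S_* + ε ψ σ². Then for all ε in a neighborhood of 0 one has G(S_ε) < ∞ and ∫|F| f_{S_ε} < ∞, and the map ε ↦ ϑ_{S_ε} := ∫_ℝ F f_{S_ε} is differentiable at ε = 0 with derivative 2( ∫_ℝ F(x)(∫_0^x ψ(v) dv) f_*(x) dx − ϑ_* ∫_ℝ (∫_0^x ψ(v) dv) f_*(x) dx ). -/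
open MeasureTheory Real Set Filter intervalIntegral

noncomputable section

/-- The (unnormalized) invariant density `σ(y)⁻² exp(2 ∫_0^y S/σ²)` of the diffusion with
drift `S` and diffusion coefficient `σ`. -/
def invDensKernel (σ S : ℝ → ℝ) (y : ℝ) : ℝ :=
  ((σ y) ^ 2)⁻¹ * Real.exp (2 * ∫ v in (0:ℝ)..y, S v / (σ v) ^ 2)

/-- The normalized invariant density `f_S = G(S)⁻¹ σ⁻² exp(2 ∫_0^y S/σ²)`. -/
def invDens (σ S : ℝ → ℝ) (y : ℝ) : ℝ :=
  (∫ z : ℝ, invDensKernel σ S z)⁻¹ * invDensKernel σ S y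

/-- Let `σ` be continuous positive, `S_*` continuous with `G(S_*) < ∞`, `f_*`
the invariant density of `S_*`, `F` measurable with `∫ |F| f_* < ∞`, `ϑ_* = ∫ F f_*`.  Let `ψ`
be continuous with compact support and `S_ε = S_* + ε ψ σ²`.  Then for all `ε` in a
neighborhood of `0` we have `G(S_ε) < ∞` and `∫ |F| f_{S_ε} < ∞`, and
`ε ↦ ϑ_{S_ε} = ∫ F f_{S_ε}` is differentiable at `ε = 0` with derivative
`2 (∫ F(x)(∫_0^x ψ) f_*(x) dx - ϑ_* ∫ (∫_0^x ψ) f_*(x) dx)`. -/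
theorem moment_estimation_stmt7
    (σ Sstar : ℝ → ℝ)
    (hσc : Continuous σ) (hσpos : ∀ x, 0 < σ x)
    (hSc : Continuous Sstar)
    (hGfin : Integrable (invDensKernel σ Sstar))
    (F : ℝ → ℝ) (hFm : Measurable F)
    (hFint : Integrable (fun x => |F x| * invDens σ Sstar x))
    (ϑstar : ℝ) (hϑ : ϑstar = ∫ x : ℝ, F x * invDens σ Sstar x)
    (ψ : ℝ → ℝ) (hψc : Continuous ψ) (hψs : HasCompactSupport ψ) :
    ∃ ε₀ > (0:ℝ),
      (∀ ε : ℝ, |ε| < ε₀ →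
        Integrable (invDensKernel σ (fun v => Sstar v + ε * ψ v * (σ v) ^ 2)) ∧
        Integrable (fun x =>
          |F x| * invDens σ (fun v => Sstar v + ε * ψ v * (σ v) ^ 2) x)) ∧
      HasDerivAt
        (fun ε : ℝ => ∫ x : ℝ, F x * invDens σ (fun v => Sstar v + ε * ψ v * (σ v) ^ 2) x)
        (2 * ((∫ x : ℝ, F x * (∫ v in (0:ℝ)..x, ψ v) * invDens σ Sstar x)
          - ϑstar * ∫ x : ℝ, (∫ v in (0:ℝ)..x, ψ v) * invDens σ Sstar x))
        0 := by
  classical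
  -- Basic positivity facts
  have hσ2pos : ∀ v, (0:ℝ) < (σ v) ^ 2 := fun v => pow_pos (hσpos v) 2
  have hσ2ne : ∀ v, (σ v) ^ 2 ≠ 0 := fun v => (hσ2pos v).ne'
  -- The primitive of ψ
  set Ψ : ℝ → ℝ := fun y => ∫ v in (0:ℝ)..y, ψ v with hΨdef
  have hψint : Integrable ψ := hψc.integrable_of_hasCompactSupport hψs
  have hΨc : Continuous Ψ :=
    intervalIntegral.continuous_primitive (fun a b => hψc.intervalIntegrable a b) 0
  -- Bound on Ψ
  set C : ℝ := ∫ x : ℝ, |ψ x| with hCdef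
  have hC0 : 0 ≤ C := integral_nonneg fun x => abs_nonneg _
  have hC : ∀ y, |Ψ y| ≤ C := by
    intro y
    have habs : ∀ a b : ℝ, a ≤ b → |∫ v in a..b, ψ v| ≤ C := by
      intro a b hab
      calc |∫ v in a..b, ψ v| ≤ ∫ v in a..b, |ψ v| :=
            intervalIntegral.abs_integral_le_integral_abs hab
        _ = ∫ v in Ioc a b, |ψ v| := intervalIntegral.integral_of_le hab
        _ ≤ ∫ v : ℝ, |ψ v| :=
            setIntegral_le_integral hψint.abs (ae_of_all _ fun x => abs_nonneg _)
    rcases le_total 0 y with hy | hy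
    · exact habs 0 y hy
    · have := habs y 0 hy
      rw [hΨdef]
      simpa [intervalIntegral.integral_symm y 0, abs_neg] using this
  -- Positivity and continuity of the unperturbed kernel
  have hkpos : ∀ y, 0 < invDensKernel σ Sstar y := fun y =>
    mul_pos (inv_pos.2 (hσ2pos y)) (Real.exp_pos _)
  set Gs : ℝ := ∫ z : ℝ, invDensKernel σ Sstar z with hGsdef
  have hGspos : 0 < Gs := by
    rw [hGsdef, integral_pos_iff_support_of_nonneg (fun y => (hkpos y).le) hGfin]
    have : Function.support (invDensKernel σ Sstar) = Set.univ :=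
      Set.eq_univ_of_forall fun y => (hkpos y).ne'
    simp [this]
  -- the normalized density
  have hfc : Continuous (invDens σ Sstar) := by
    have hSdivc : Continuous fun v => Sstar v / (σ v) ^ 2 :=
      hSc.div (hσc.pow 2) hσ2ne
    have hkc : Continuous (invDensKernel σ Sstar) := by
      unfold invDensKernel
      exact ((hσc.pow 2).inv₀ hσ2ne).mul
        (Real.continuous_exp.comp (continuous_const.mul
          (intervalIntegral.continuous_primitive
            (fun a b => hSdivc.intervalIntegrable a b) 0)))
    exact continuous_const.mul hkc
  have hfnonneg : ∀ y, 0 ≤ invDens σ Sstar y := fun y =>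
    mul_nonneg (inv_nonneg.2 (le_of_lt hGspos)) (hkpos y).le
  have hfint : Integrable (invDens σ Sstar) := hGfin.const_mul _
  have hfone : (∫ x : ℝ, invDens σ Sstar x) = 1 := by
    unfold invDens
    rw [MeasureTheory.integral_const_mul, inv_mul_cancel₀ hGspos.ne']
  -- the integrable function g = F · f_*
  set g : ℝ → ℝ := fun x => F x * invDens σ Sstar x with hgdef
  have hgm : AEStronglyMeasurable g volume :=
    (hFm.mul hfc.measurable).aestronglyMeasurable
  have hgint : Integrable g := by
    refine hFint.mono' hgm (ae_of_all _ fun x => ?_)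
    rw [hgdef]
    simp only [Real.norm_eq_abs, abs_mul, abs_of_nonneg (hfnonneg x)]
    exact le_rfl
  -- factorization of the perturbed kernel
  have hker : ∀ (ε y : ℝ),
      invDensKernel σ (fun v => Sstar v + ε * ψ v * (σ v) ^ 2) y
        = Real.exp (2 * ε * Ψ y) * invDensKernel σ Sstar y := by
    intro ε y
    have hi1 : IntervalIntegrable (fun v => Sstar v / (σ v) ^ 2) volume 0 y :=
      (hSc.div (hσc.pow 2) hσ2ne).intervalIntegrable 0 y
    have hi2 : IntervalIntegrable (fun v => ε * ψ v) volume 0 y :=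
      (continuous_const.mul hψc).intervalIntegrable 0 y
    have h2 : (∫ v in (0:ℝ)..y, (Sstar v + ε * ψ v * (σ v) ^ 2) / (σ v) ^ 2)
        = (∫ v in (0:ℝ)..y, Sstar v / (σ v) ^ 2) + ε * Ψ y := by
      have h1 : ∀ v, (Sstar v + ε * ψ v * (σ v) ^ 2) / (σ v) ^ 2
          = Sstar v / (σ v) ^ 2 + ε * ψ v := by
        intro v; rw [add_div, mul_div_assoc, div_self (hσ2ne v), mul_one]
      rw [intervalIntegral.integral_congr (fun v _ => h1 v),
        intervalIntegral.integral_add hi1 hi2, intervalIntegral.integral_const_mul]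
    unfold invDensKernel
    rw [h2, mul_add, Real.exp_add, show (2:ℝ) * (ε * Ψ y) = 2 * ε * Ψ y by ring]
    ring
  -- continuity of exp factor
  have hexpc : ∀ ε : ℝ, Continuous fun x => Real.exp (2 * ε * Ψ x) := fun ε =>
    Real.continuous_exp.comp (continuous_const.mul hΨc)
  -- exp factor bounded
  have hexpbd : ∀ ε : ℝ, |ε| ≤ 1 → ∀ x, Real.exp (2 * ε * Ψ x) ≤ Real.exp (2 * C) := by
    intro ε hε x
    apply Real.exp_le_exp.2
    calc 2 * ε * Ψ x ≤ |2 * ε * Ψ x| := le_abs_self _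
      _ = 2 * (|ε| * |Ψ x|) := by rw [abs_mul, abs_mul, abs_two, mul_assoc]
      _ ≤ 2 * (1 * C) := by
          have h1 := hC x
          have h2 : (0:ℝ) ≤ |ε| := abs_nonneg _
          nlinarith [abs_nonneg (Ψ x)]
      _ = 2 * C := by ring
  -- integrability of exp(2εΨ)·h for integrable h
  have hint_all : ∀ h : ℝ → ℝ, Integrable h → ∀ ε : ℝ,
      Integrable fun x => Real.exp (2 * ε * Ψ x) * h x := by
    intro h hh ε
    refine hh.bdd_mul (c := Real.exp (2 * |ε| * C)) (hexpc ε).aestronglyMeasurable (ae_of_all _ fun x => ?_)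
    rw [Real.norm_eq_abs, abs_of_pos (Real.exp_pos _)]
    apply Real.exp_le_exp.2
    calc 2 * ε * Ψ x ≤ |2 * ε * Ψ x| := le_abs_self _
      _ = 2 * |ε| * |Ψ x| := by rw [abs_mul, abs_mul, abs_two]
      _ ≤ 2 * |ε| * C := by
          have := hC x
          nlinarith [abs_nonneg ε]
  -- differentiation under the integral sign
  have key : ∀ h : ℝ → ℝ, Integrable h →
      HasDerivAt (fun ε : ℝ => ∫ x : ℝ, Real.exp (2 * ε * Ψ x) * h x)
        (∫ x : ℝ, 2 * Ψ x * h x) 0 := by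
    intro h hh
    have hdiff : ∀ (x ε' : ℝ),
        HasDerivAt (fun ε'' : ℝ => Real.exp (2 * ε'' * Ψ x) * h x)
          (2 * Ψ x * (Real.exp (2 * ε' * Ψ x) * h x)) ε' := by
      intro x ε'
      have h1 : HasDerivAt (fun ε'' : ℝ => 2 * ε'' * Ψ x) (2 * Ψ x) ε' := by
        simpa using ((hasDerivAt_id ε').const_mul (2:ℝ)).mul_const (Ψ x)
      have h2 := h1.exp.mul_const (h x)
      refine h2.congr_deriv ?_
      ring
    have hb : ∀ x : ℝ, ∀ ε' ∈ Metric.ball (0:ℝ) 1,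
        ‖2 * Ψ x * (Real.exp (2 * ε' * Ψ x) * h x)‖ ≤ 2 * C * Real.exp (2 * C) * ‖h x‖ := by
      intro x ε' hε'
      rw [Metric.mem_ball, dist_zero_right, Real.norm_eq_abs] at hε'
      have h2 : Real.exp (2 * ε' * Ψ x) ≤ Real.exp (2 * C) := hexpbd ε' hε'.le x
      have h1 : |Ψ x| ≤ C := hC x
      have hkey : |Ψ x| * Real.exp (2 * ε' * Ψ x) * |h x|
          ≤ C * Real.exp (2 * C) * |h x| :=
        mul_le_mul_of_nonneg_right
          (mul_le_mul h1 h2 (Real.exp_pos _).le hC0) (abs_nonneg _)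
      rw [Real.norm_eq_abs, Real.norm_eq_abs, abs_mul, abs_mul, abs_mul, abs_two,
        abs_of_pos (Real.exp_pos _)]
      nlinarith [hkey]
    have H := hasDerivAt_integral_of_dominated_loc_of_deriv_le (μ := volume) (x₀ := (0:ℝ))
      (F := fun ε x => Real.exp (2 * ε * Ψ x) * h x)
      (F' := fun ε x => 2 * Ψ x * (Real.exp (2 * ε * Ψ x) * h x))
      (bound := fun x => 2 * C * Real.exp (2 * C) * ‖h x‖)
      (Metric.ball_mem_nhds 0 one_pos)
      (Eventually.of_forall fun ε => ((hexpc ε).aestronglyMeasurable.mul hh.1))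
      (hint_all h hh 0)
      (((continuous_const.mul hΨc).aestronglyMeasurable).mul
        ((hexpc 0).aestronglyMeasurable.mul hh.1))
      (ae_of_all _ fun x ε' hε' => hb x ε' hε')
      (hh.norm.const_mul _)
      (ae_of_all _ fun x ε' _ => hdiff x ε')
    simpa using H.2
  -- the perturbed normalization constant
  have hGe_int : ∀ ε : ℝ, Integrable fun x => Real.exp (2 * ε * Ψ x) * invDensKernel σ Sstar x :=
    fun ε => hint_all _ hGfin ε
  have hGe_pos : ∀ ε : ℝ, 0 < ∫ x : ℝ, Real.exp (2 * ε * Ψ x) * invDensKernel σ Sstar x := by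
    intro ε
    rw [integral_pos_iff_support_of_nonneg
      (fun y => mul_nonneg (Real.exp_pos _).le (hkpos y).le) (hGe_int ε)]
    have : (Function.support fun x => Real.exp (2 * ε * Ψ x) * invDensKernel σ Sstar x)
        = Set.univ :=
      Set.eq_univ_of_forall fun y => (mul_pos (Real.exp_pos _) (hkpos y)).ne'
    simp [this]
  -- rewrite the perturbed kernel integral
  have hkerint : ∀ ε : ℝ,
      (∫ z : ℝ, invDensKernel σ (fun v => Sstar v + ε * ψ v * (σ v) ^ 2) z)
        = ∫ x : ℝ, Real.exp (2 * ε * Ψ x) * invDensKernel σ Sstar x := by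
    intro ε
    exact integral_congr_ae (ae_of_all _ fun z => hker ε z)
  -- the perturbed density in closed form
  have hdens : ∀ (ε x : ℝ),
      invDens σ (fun v => Sstar v + ε * ψ v * (σ v) ^ 2) x
        = (∫ z : ℝ, Real.exp (2 * ε * Ψ z) * invDensKernel σ Sstar z)⁻¹
            * (Real.exp (2 * ε * Ψ x) * invDensKernel σ Sstar x) := by
    intro ε x
    unfold invDens
    rw [hkerint ε, hker ε x]
  -- integrability claims (for all ε)
  have hmainint : ∀ ε : ℝ,
      Integrable (invDensKernel σ (fun v => Sstar v + ε * ψ v * (σ v) ^ 2)) ∧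
      Integrable (fun x =>
        |F x| * invDens σ (fun v => Sstar v + ε * ψ v * (σ v) ^ 2) x) := by
    intro ε
    constructor
    · have : (invDensKernel σ (fun v => Sstar v + ε * ψ v * (σ v) ^ 2))
          = fun x => Real.exp (2 * ε * Ψ x) * invDensKernel σ Sstar x :=
        funext fun y => hker ε y
      rw [this]; exact hGe_int ε
    · have heq : (fun x => |F x| * invDens σ (fun v => Sstar v + ε * ψ v * (σ v) ^ 2) x)
          = fun x => ((∫ z : ℝ, Real.exp (2 * ε * Ψ z) * invDensKernel σ Sstar z)⁻¹ * Gs)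
              * (Real.exp (2 * ε * Ψ x) * (|F x| * invDens σ Sstar x)) := by
        funext x
        rw [hdens ε x]
        have hfd : invDens σ Sstar x = Gs⁻¹ * invDensKernel σ Sstar x := rfl
        rw [hfd]
        have hApos := hGe_pos ε
        generalize hA : (∫ z : ℝ, Real.exp (2 * ε * Ψ z) * invDensKernel σ Sstar z) = A
          at hApos ⊢
        field_simp
      rw [heq]
      exact (hint_all _ hFint ε).const_mul _
  -- the statistic as a quotient
  have hquot : ∀ ε : ℝ,
      (∫ x : ℝ, F x * invDens σ (fun v => Sstar v + ε * ψ v * (σ v) ^ 2) x)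
        = (∫ x : ℝ, Real.exp (2 * ε * Ψ x) * g x)
            / (∫ x : ℝ, Real.exp (2 * ε * Ψ x) * invDens σ Sstar x) := by
    intro ε
    have hD : (∫ x : ℝ, Real.exp (2 * ε * Ψ x) * invDens σ Sstar x)
        = Gs⁻¹ * ∫ x : ℝ, Real.exp (2 * ε * Ψ x) * invDensKernel σ Sstar x := by
      rw [← MeasureTheory.integral_const_mul]
      congr 1
      funext x
      have hfd : invDens σ Sstar x = Gs⁻¹ * invDensKernel σ Sstar x := rfl
      rw [hfd]; ring
    have hN : (∫ x : ℝ, F x * invDens σ (fun v => Sstar v + ε * ψ v * (σ v) ^ 2) x)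
        = ((∫ z : ℝ, Real.exp (2 * ε * Ψ z) * invDensKernel σ Sstar z)⁻¹ * Gs)
            * ∫ x : ℝ, Real.exp (2 * ε * Ψ x) * g x := by
      rw [← MeasureTheory.integral_const_mul]
      congr 1
      funext x
      rw [hdens ε x]
      have hfd : invDens σ Sstar x = Gs⁻¹ * invDensKernel σ Sstar x := rfl
      rw [hgdef]
      simp only [hfd]
      have hApos := hGe_pos ε
      generalize hA : (∫ z : ℝ, Real.exp (2 * ε * Ψ z) * invDensKernel σ Sstar z) = A
        at hApos ⊢
      field_simp
    rw [hN, hD]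
    have hApos := hGe_pos ε
    generalize hA : (∫ x : ℝ, Real.exp (2 * ε * Ψ x) * invDensKernel σ Sstar x) = A
      at hApos ⊢
    generalize (∫ x : ℝ, Real.exp (2 * ε * Ψ x) * g x) = N
    field_simp
  -- endgame
  refine ⟨1, one_pos, fun ε _ => hmainint ε, ?_⟩
  have hfun : (fun ε : ℝ => ∫ x : ℝ,
      F x * invDens σ (fun v => Sstar v + ε * ψ v * (σ v) ^ 2) x)
      = fun ε : ℝ => (∫ x : ℝ, Real.exp (2 * ε * Ψ x) * g x)
          / (∫ x : ℝ, Real.exp (2 * ε * Ψ x) * invDens σ Sstar x) :=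
    funext hquot
  rw [hfun]
  have hDval : (∫ x : ℝ, Real.exp (2 * (0:ℝ) * Ψ x) * invDens σ Sstar x) = 1 := by
    simpa using hfone
  have hNval : (∫ x : ℝ, Real.exp (2 * (0:ℝ) * Ψ x) * g x) = ϑstar := by
    rw [hϑ]; simp [hgdef]
  have hDer := (key g hgint).div (key _ hfint) (by rw [hDval]; exact one_ne_zero)
  refine hDer.congr_deriv ?_
  simp only [hDval, hNval]
  have hA : (∫ x : ℝ, 2 * Ψ x * g x)
      = 2 * ∫ x : ℝ, F x * (∫ v in (0:ℝ)..x, ψ v) * invDens σ Sstar x := by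
    rw [← MeasureTheory.integral_const_mul]
    congr 1
    funext x
    rw [hgdef]
    show 2 * (∫ v in (0:ℝ)..x, ψ v) * (F x * invDens σ Sstar x)
      = 2 * (F x * (∫ v in (0:ℝ)..x, ψ v) * invDens σ Sstar x)
    ring
  have hB : (∫ x : ℝ, 2 * Ψ x * invDens σ Sstar x)
      = 2 * ∫ x : ℝ, (∫ v in (0:ℝ)..x, ψ v) * invDens σ Sstar x := by
    rw [← MeasureTheory.integral_const_mul]
    congr 1
    funext x
    show 2 * (∫ v in (0:ℝ)..x, ψ v) * invDens σ Sstar x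
      = 2 * ((∫ v in (0:ℝ)..x, ψ v) * invDens σ Sstar x)
    ring
  rw [hA, hB]
  ring

end
end
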